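/- Let (X_k)_{k∈ℕ} be a nonnegative, integrable stochastic process adapted to a filtration (F_k)_{k∈ℕ} on a probability space (Ω, F, P), and let κ ∈ (0,1), ψ ≥ 0 be constants such that E[X_{k+1} | F_k] ≤ κ X_k + ψ almost surely for every k. Let 0 < η < δ and suppose X₀ ≤ η almost surely, and let T ∈ ℕ. Then P( ∃ k ∈ {0, 1, …, T} : X_k ≥ δ ) ≤ β₁, where β₁ = 1 − (1 − η/δ)(1 − ψ/δ)^T if δ ≥ ψ/(1−κ), and β₁ = (η/δ) κ^T + (ψ/((1−κ)δ)) (1 − κ^T) if δ < ψ/(1−κ). -/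

import Mathlib

open MeasureTheory

/-- **(Statement 7)** Finite-horizon safety bound for a nonnegative process satisfying the
supermartingale-like drift condition `E[X_{k+1} | F_k] ≤ κ X_k + ψ` with `κ ∈ (0,1)`. -/
theorem finite_horizon_safety_bound
    {Ω : Type*} {m0 : MeasurableSpace Ω} {P : Measure Ω} [IsProbabilityMeasure P]
    (ℱ : Filtration ℕ m0) (X : ℕ → Ω → ℝ)
    (hadapted : Adapted ℱ X)
    (hnonneg : ∀ k, ∀ᵐ ω ∂P, 0 ≤ X k ω)
    (hint : ∀ k, Integrable (X k) P)
    (κ ψ : ℝ) (hκ0 : 0 < κ) (hκ1 : κ < 1) (hψ : 0 ≤ ψ)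
    (hdrift : ∀ k, ∀ᵐ ω ∂P, (P[X (k + 1)|ℱ k]) ω ≤ κ * X k ω + ψ)
    (η δ : ℝ) (hη : 0 < η) (hηδ : η < δ)
    (hX0 : ∀ᵐ ω ∂P, X 0 ω ≤ η) (T : ℕ) :
    (P {ω | ∃ k ≤ T, δ ≤ X k ω}).toReal ≤
      if ψ / (1 - κ) ≤ δ then 1 - (1 - η / δ) * (1 - ψ / δ) ^ T
      else (η / δ) * κ ^ T + (ψ / ((1 - κ) * δ)) * (1 - κ ^ T) := by
  classical
  have hδ : 0 < δ := hη.trans hηδ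
  have h1κ : 0 < 1 - κ := by linarith
  set A : ℕ → Set Ω := fun k => {ω | ∀ j ≤ k, X j ω < δ} with hA
  -- measurability of A k with respect to ℱ k
  have hmeasF : ∀ k, MeasurableSet[ℱ k] (A k) := by
    intro k
    have hAe : A k = ⋂ j ∈ Finset.Iic k, {ω | X j ω < δ} := by
      ext ω; simp [hA]
    rw [hAe]
    refine MeasurableSet.biInter (Set.to_countable _) fun j hj => ?_
    have hj' : j ≤ k := Finset.mem_Iic.mp hj
    have hs : MeasurableSet[ℱ j] {ω | X j ω < δ} :=
      measurableSet_lt (hadapted j) measurable_const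
    exact ℱ.mono hj' _ hs
  have hmeas : ∀ k, MeasurableSet (A k) := fun k => ℱ.le k _ (hmeasF k)
  have hXd : ∀ k, MeasurableSet {ω | δ ≤ X k ω} := fun k =>
    measurableSet_le measurable_const ((hadapted k).mono (ℱ.le k) le_rfl)
  -- target set is the complement of A T
  have hset : {ω | ∃ k ≤ T, δ ≤ X k ω} = (A T)ᶜ := by
    ext ω
    simp only [hA, Set.mem_setOf_eq, Set.mem_compl_iff, not_forall, not_lt]
    constructor
    · rintro ⟨k, hk, hx⟩; exact ⟨k, hk, hx⟩
    · rintro ⟨k, hk, hx⟩; exact ⟨k, hk, hx⟩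
  have hAsucc : ∀ k, A (k + 1) = A k ∩ {ω | X (k + 1) ω < δ} := by
    intro k; ext ω
    simp only [hA, Set.mem_setOf_eq, Set.mem_inter_iff]
    constructor
    · intro h; exact ⟨fun j hj => h j (hj.trans (Nat.le_succ k)), h (k + 1) le_rfl⟩
    · rintro ⟨h1, h2⟩ j hj
      by_cases hjk : j ≤ k
      · exact h1 j hjk
      · have : j = k + 1 := by omega
        rw [this]; exact h2
  have hsplit : ∀ k, A k = A (k + 1) ∪ (A k ∩ {ω | δ ≤ X (k + 1) ω}) := by
    intro k; rw [hAsucc k]; ext ω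
    simp only [Set.mem_union, Set.mem_inter_iff, Set.mem_setOf_eq]
    constructor
    · intro h
      by_cases hx : X (k + 1) ω < δ
      · exact Or.inl ⟨h, hx⟩
      · exact Or.inr ⟨h, not_lt.mp hx⟩
    · rintro (⟨h, _⟩ | ⟨h, _⟩) <;> exact h
  have hdisj : ∀ k, Disjoint (A (k + 1)) (A k ∩ {ω | δ ≤ X (k + 1) ω}) := by
    intro k; rw [hAsucc k]
    refine Set.disjoint_left.mpr ?_
    rintro ω ⟨_, h1⟩ ⟨_, h2⟩
    simp only [Set.mem_setOf_eq] at h1 h2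
    linarith
  have hinterMeas : ∀ k, MeasurableSet (A k ∩ {ω | δ ≤ X (k + 1) ω}) := fun k =>
    (hmeas k).inter (hXd (k + 1))
  -- the key drift inequality on A k
  set S : ℕ → ℝ := fun k => ∫ ω in A k, X k ω ∂P with hS
  set p : ℕ → ℝ := fun k => (P (A k)).toReal with hp
  have hp0 : ∀ k, 0 ≤ p k := fun k => ENNReal.toReal_nonneg
  have hp01 : ∀ k, p k ≤ 1 := fun k => by
    simpa using ENNReal.toReal_mono ENNReal.one_ne_top (prob_le_one (μ := P) (s := A k))
  have hkey : ∀ k, ∫ ω in A k, X (k + 1) ω ∂P ≤ κ * S k + ψ * p k := by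
    intro k
    have h1 : ∫ ω in A k, X (k + 1) ω ∂P = ∫ ω in A k, (P[X (k + 1)|ℱ k]) ω ∂P :=
      (setIntegral_condExp (ℱ.le k) (hint (k + 1)) (hmeasF k)).symm
    have h2 : ∫ ω in A k, (P[X (k + 1)|ℱ k]) ω ∂P ≤ ∫ ω in A k, (κ * X k ω + ψ) ∂P :=
      setIntegral_mono_ae integrable_condExp.integrableOn
        ((((hint k).const_mul κ).add (integrable_const ψ)).integrableOn) (hdrift k)
    have h3 : ∫ ω in A k, (κ * X k ω + ψ) ∂P = κ * S k + ψ * p k := by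
      rw [integral_add (((hint k).const_mul κ).integrableOn)
        ((integrable_const ψ).integrableOn), integral_const_mul, setIntegral_const,
        smul_eq_mul, mul_comm (P.real (A k)) ψ]; rfl
    rw [h1, ← h3]; exact h2.trans_eq rfl
  have hSnonneg : ∀ k, 0 ≤ S k := fun k =>
    setIntegral_nonneg_of_ae_restrict (ae_restrict_of_ae (hnonneg k))
  have hpsplit : ∀ k, p k = p (k + 1) + (P (A k ∩ {ω | δ ≤ X (k + 1) ω})).toReal := by
    intro k
    have h1 : P (A k) = P (A (k + 1)) + P (A k ∩ {ω | δ ≤ X (k + 1) ω}) := by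
      conv_lhs => rw [hsplit k]
      exact measure_union (hdisj k) (hinterMeas k)
    show (P (A k)).toReal = (P (A (k + 1))).toReal + _
    rw [h1, ENNReal.toReal_add (measure_ne_top P _) (measure_ne_top P _)]
  have hA0 : P ((A 0)ᶜ) = 0 := by
    refine measure_mono_null ?_ (ae_iff.mp hX0)
    intro ω hω
    simp only [hA, Set.mem_compl_iff, Set.mem_setOf_eq, not_forall, not_lt] at hω
    obtain ⟨j, hj, hx⟩ := hω
    interval_cases j
    simp only [Set.mem_setOf_eq]
    intro h; linarith
  have hp1 : p 0 = 1 := by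
    have : P (A 0) = 1 := by
      have := measure_add_measure_compl (μ := P) (hmeas 0)
      rw [hA0, add_zero] at this; simpa using this
    rw [hp]; simp [this]
  have hcompl : (P ((A T)ᶜ)).toReal = 1 - p T := by
    rw [measure_compl (hmeas T) (measure_ne_top P _), measure_univ,
      ENNReal.toReal_sub_of_le prob_le_one (by simp)]
    simp [hp]
  rw [hset, hcompl]
  split_ifs with hcase
  · -- Case 1 : ψ/(1-κ) ≤ δ
    have hψδ : ψ ≤ (1 - κ) * δ := by
      rw [div_le_iff₀ h1κ] at hcase; linarith
    have hcoef : κ ≤ 1 - ψ / δ := by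
      have : ψ / δ ≤ 1 - κ := (div_le_iff₀ hδ).mpr (by linarith)
      linarith
    have hψδ1 : 0 ≤ 1 - ψ / δ := by linarith
    set I : ℕ → ℝ := fun k => ∫ ω in A k, (δ - X k ω) ∂P with hI
    have hIexp : ∀ k, I k = δ * p k - S k := by
      intro k
      show ∫ ω in A k, (δ - X k ω) ∂P = δ * (P (A k)).toReal - S k
      rw [integral_sub ((integrable_const δ).integrableOn) ((hint k).integrableOn),
        setIntegral_const, smul_eq_mul, mul_comm]; rfl
    have base : δ - η ≤ I 0 := by
      have hle : (fun _ => δ - η) ≤ᵐ[P] fun ω => δ - X 0 ω :=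
        hX0.mono fun ω h => by dsimp; linarith
      have h1 : ∫ ω in A 0, (δ - η) ∂P ≤ ∫ ω in A 0, (δ - X 0 ω) ∂P :=
        setIntegral_mono_ae (integrable_const (δ - η)).integrableOn
          (((integrable_const δ).sub (hint 0)).integrableOn) hle
      rw [setIntegral_const, smul_eq_mul] at h1
      have : P.real (A 0) = 1 := hp1
      rw [this, one_mul] at h1
      exact h1
    have step : ∀ k, (1 - ψ / δ) * I k ≤ I (k + 1) := by
      intro k
      have e1 : ∫ ω in A k, (δ - X (k + 1) ω) ∂P ≤ I (k + 1) := by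
        have hu : ∫ ω in A k, (δ - X (k + 1) ω) ∂P =
            I (k + 1) + ∫ ω in A k ∩ {ω | δ ≤ X (k + 1) ω}, (δ - X (k + 1) ω) ∂P := by
          conv_lhs => rw [hsplit k]
          exact setIntegral_union (hdisj k) (hinterMeas k)
            (((integrable_const δ).sub (hint (k + 1))).integrableOn)
            (((integrable_const δ).sub (hint (k + 1))).integrableOn)
        have h2 : ∫ ω in A k ∩ {ω | δ ≤ X (k + 1) ω}, (δ - X (k + 1) ω) ∂P ≤ 0 := by
          refine setIntegral_nonpos (hinterMeas k) fun ω hω => ?_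
          have := hω.2
          simp only [Set.mem_setOf_eq] at this
          linarith
        linarith
      have e2 : ∫ ω in A k, (δ - X (k + 1) ω) ∂P =
          δ * p k - ∫ ω in A k, X (k + 1) ω ∂P := by
        rw [integral_sub ((integrable_const δ).integrableOn) ((hint (k + 1)).integrableOn),
          setIntegral_const, smul_eq_mul, mul_comm]; rfl
      have e3 := hkey k
      have hprod : κ * S k ≤ (1 - ψ / δ) * S k :=
        mul_le_mul_of_nonneg_right hcoef (hSnonneg k)
      have expand : (1 - ψ / δ) * I k = (δ - ψ) * p k - (1 - ψ / δ) * S k := by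
        rw [hIexp k]; field_simp
      have : (1 - ψ / δ) * I k ≤ δ * p k - (κ * S k + ψ * p k) := by
        rw [expand]; nlinarith [hprod]
      linarith
    have main : ∀ k, (δ - η) * (1 - ψ / δ) ^ k ≤ I k := by
      intro k
      induction k with
      | zero => simpa using base
      | succ n ih =>
        calc (δ - η) * (1 - ψ / δ) ^ (n + 1)
            = (1 - ψ / δ) * ((δ - η) * (1 - ψ / δ) ^ n) := by ring
          _ ≤ (1 - ψ / δ) * I n := mul_le_mul_of_nonneg_left ih hψδ1
          _ ≤ I (n + 1) := step n
    have hIT : I T ≤ p T * δ := by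
      have hle : (fun ω => δ - X T ω) ≤ᵐ[P] fun _ => δ :=
        (hnonneg T).mono fun ω h => by dsimp; linarith
      have h1 : I T ≤ ∫ ω in A T, δ ∂P :=
        setIntegral_mono_ae (((integrable_const δ).sub (hint T)).integrableOn)
          (integrable_const δ).integrableOn hle
      rwa [setIntegral_const, smul_eq_mul] at h1
    have hfinal : (1 - η / δ) * (1 - ψ / δ) ^ T ≤ p T := by
      have heq : (1 - η / δ) = (δ - η) / δ := by field_simp
      rw [heq, div_mul_eq_mul_div, div_le_iff₀ hδ]
      calc (δ - η) * (1 - ψ / δ) ^ T ≤ I T := main T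
        _ ≤ p T * δ := hIT
    linarith
  · -- Case 2 : δ < ψ/(1-κ)
    have hψδ : δ * (1 - κ) < ψ := by
      push_neg at hcase
      exact (lt_div_iff₀ h1κ).mp hcase
    set J : ℕ → ℝ := fun k => S k + δ * (1 - p k) with hJ
    have step2 : ∀ k, J (k + 1) ≤ κ * J k + ψ := by
      intro k
      set q : ℝ := (P (A k ∩ {ω | δ ≤ X (k + 1) ω})).toReal with hq
      have hq0 : 0 ≤ q := ENNReal.toReal_nonneg
      have e1 : S (k + 1) + δ * q ≤ ∫ ω in A k, X (k + 1) ω ∂P := by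
        have hu : ∫ ω in A k, X (k + 1) ω ∂P =
            S (k + 1) + ∫ ω in A k ∩ {ω | δ ≤ X (k + 1) ω}, X (k + 1) ω ∂P := by
          conv_lhs => rw [hsplit k]
          exact setIntegral_union (hdisj k) (hinterMeas k)
            ((hint (k + 1)).integrableOn) ((hint (k + 1)).integrableOn)
        have h2 : δ * q ≤ ∫ ω in A k ∩ {ω | δ ≤ X (k + 1) ω}, X (k + 1) ω ∂P := by
          refine setIntegral_ge_of_const_le_real (hinterMeas k) (measure_ne_top P _)
            (fun ω hω => hω.2) ((hint (k + 1)).integrableOn)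
        linarith
      have e2 : 1 - p (k + 1) = (1 - p k) + q := by
        have := hpsplit k; rw [← hq] at this; linarith
      have e3 := hkey k
      have h1pk : 0 ≤ 1 - p k := by linarith [hp01 k]
      have hslack : 0 ≤ (ψ - δ * (1 - κ)) * (1 - p k) :=
        mul_nonneg (by linarith) h1pk
      have hJ1 : J (k + 1) = S (k + 1) + δ * (1 - p k) + δ * q := by
        have : J (k + 1) = S (k + 1) + δ * (1 - p (k + 1)) := rfl
        rw [this, e2]; ring
      have hJk : κ * J k = κ * S k + κ * (δ * (1 - p k)) := by
        have : J k = S k + δ * (1 - p k) := rfl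
        rw [this]; ring
      rw [hJ1, hJk]
      nlinarith [e1, e3, hslack]
    have base2 : J 0 ≤ η := by
      have hle : (fun ω => X 0 ω) ≤ᵐ[P] fun _ => η := hX0
      have h1 : S 0 ≤ ∫ ω in A 0, η ∂P :=
        setIntegral_mono_ae (hint 0).integrableOn (integrable_const η).integrableOn hle
      rw [setIntegral_const, smul_eq_mul] at h1
      have hpp : P.real (A 0) = 1 := hp1
      rw [hpp, one_mul] at h1
      have h3 : J 0 = S 0 + δ * (1 - p 0) := rfl
      rw [h3, hp1]; simpa using h1
    have main2 : ∀ k, J k ≤ η * κ ^ k + ψ / (1 - κ) * (1 - κ ^ k) := by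
      intro k
      induction k with
      | zero => simpa using base2
      | succ n ih =>
        have h1 : κ * (η * κ ^ n + ψ / (1 - κ) * (1 - κ ^ n)) + ψ =
            η * κ ^ (n + 1) + ψ / (1 - κ) * (1 - κ ^ (n + 1)) := by
          field_simp; ring
        calc J (n + 1) ≤ κ * J n + ψ := step2 n
          _ ≤ κ * (η * κ ^ n + ψ / (1 - κ) * (1 - κ ^ n)) + ψ := by
              have := mul_le_mul_of_nonneg_left ih hκ0.le; linarith
          _ = _ := h1
    have hfin : δ * (1 - p T) ≤ η * κ ^ T + ψ / (1 - κ) * (1 - κ ^ T) := by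
      have h1 := main2 T
      have h2 := hSnonneg T
      have h3 : J T = S T + δ * (1 - p T) := rfl
      linarith
    have hR : (η / δ) * κ ^ T + (ψ / ((1 - κ) * δ)) * (1 - κ ^ T) =
        (η * κ ^ T + ψ / (1 - κ) * (1 - κ ^ T)) / δ := by
      field_simp
    rw [hR, le_div_iff₀ hδ]
    linarith
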